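/- Let s ≥ 1 and let B ∈ ℝ^{n×m} satisfy the RIP with constant δ_{2s} < 1; set α = 2√(1 + δ_{2s})/(1 − δ_{2s}) and ρ = √2·δ_{2s}/(1 − δ_{2s}). Let h ∈ ℝ^m, and let c ≥ 0, ε ≥ 0 be reals with ‖B h‖₂ ≤ 2cε. Let T0 ⊆ {1,…,m} with |T0| ≤ s and |T0^c| ≥ s, and let T1 ⊆ T0^c be a set of exactly s indices such that |h_i| ≥ |h_j| for every i ∈ T1 and every j ∈ T0^c ∖ T1 (i.e., T1 contains the s largest-magnitude entries of h outside T0). Then ‖h_{T0∪T1}‖₂ ≤ α c ε + ρ s^{−1/2} ‖h_{T0^c}‖₁. -/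

import Mathlib

open Matrix Finset

noncomputable def l2norm {k : ℕ} (x : Fin k → ℝ) : ℝ := Real.sqrt (∑ i, (x i) ^ 2)

def l1norm {k : ℕ} (x : Fin k → ℝ) : ℝ := ∑ i, |x i|

def Sparse {k : ℕ} (s : ℕ) (x : Fin k → ℝ) : Prop :=
  (Finset.univ.filter fun i => x i ≠ 0).card ≤ s

def RIP {n m : ℕ} (s : ℕ) (δ : ℝ) (Φ : Matrix (Fin n) (Fin m) ℝ) : Prop :=
  ∀ c : Fin m → ℝ, Sparse s c →
    (1 - δ) * (l2norm c) ^ 2 ≤ (l2norm (Φ.mulVec c)) ^ 2 ∧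
    (l2norm (Φ.mulVec c)) ^ 2 ≤ (1 + δ) * (l2norm c) ^ 2

noncomputable def support {k : ℕ} (x : Fin k → ℝ) : Finset (Fin k) :=
  Finset.univ.filter fun i => x i ≠ 0

def restrict {k : ℕ} (T : Finset (Fin k)) (x : Fin k → ℝ) : Fin k → ℝ :=
  fun i => if i ∈ T then x i else 0

/-! ### auxiliary definitions -/

noncomputable def dotp {k : ℕ} (x y : Fin k → ℝ) : ℝ := ∑ i, x i * y i

lemma l2sq_nonneg {k : ℕ} (x : Fin k → ℝ) : 0 ≤ ∑ i, (x i) ^ 2 :=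
  Finset.sum_nonneg fun i _ => sq_nonneg _

lemma l2norm_nonneg {k : ℕ} (x : Fin k → ℝ) : 0 ≤ l2norm x := Real.sqrt_nonneg _

lemma l2norm_sq {k : ℕ} (x : Fin k → ℝ) : (l2norm x) ^ 2 = ∑ i, (x i) ^ 2 :=
  Real.sq_sqrt (l2sq_nonneg x)

lemma l2norm_eq_zero_iff {k : ℕ} (x : Fin k → ℝ) : l2norm x = 0 ↔ x = 0 := by
  rw [l2norm, Real.sqrt_eq_zero (l2sq_nonneg x)]
  constructor
  · intro hx
    funext i
    have := (Finset.sum_eq_zero_iff_of_nonneg (fun i _ => sq_nonneg (x i))).1 hx i (mem_univ i)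
    simpa using pow_eq_zero_iff (n := 2) (by norm_num) |>.1 this
  · intro hx; rw [hx]; simp

lemma dotp_self {k : ℕ} (x : Fin k → ℝ) : dotp x x = (l2norm x) ^ 2 := by
  rw [l2norm_sq]; unfold dotp; exact Finset.sum_congr rfl fun i _ => (sq (x i)).symm ▸ by ring

lemma dotp_le {k : ℕ} (x y : Fin k → ℝ) : dotp x y ≤ l2norm x * l2norm y :=
  Real.sum_mul_le_sqrt_mul_sqrt _ _ _

lemma dotp_add_right {k : ℕ} (x y z : Fin k → ℝ) :
    dotp x (y + z) = dotp x y + dotp x z := by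
  unfold dotp; rw [← Finset.sum_add_distrib]; exact Finset.sum_congr rfl fun i _ => by
    simp [mul_add]

lemma sparse_of_support_subset {k s : ℕ} {x : Fin k → ℝ} {T : Finset (Fin k)}
    (hsub : support x ⊆ T) (hcard : T.card ≤ s) : Sparse s x :=
  le_trans (Finset.card_le_card hsub) hcard

lemma support_restrict {k : ℕ} (T : Finset (Fin k)) (x : Fin k → ℝ) :
    support (_root_.restrict T x) ⊆ T := by
  intro i hi
  simp only [support, _root_.restrict, mem_filter] at hi
  by_contra hiT
  simp [hiT] at hi

lemma sparse_restrict {k s : ℕ} (T : Finset (Fin k)) (x : Fin k → ℝ) (hcard : T.card ≤ s) :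
    Sparse s (_root_.restrict T x) :=
  sparse_of_support_subset (support_restrict T x) hcard
lemma restrict_union {k : ℕ} (S T : Finset (Fin k)) (x : Fin k → ℝ) (hd : Disjoint S T) :
    _root_.restrict (S ∪ T) x = _root_.restrict S x + _root_.restrict T x := by
  funext i
  simp only [_root_.restrict, Pi.add_apply, Finset.mem_union]
  by_cases hS : i ∈ S
  · have hT : i ∉ T := fun hT => (Finset.disjoint_left.1 hd hS) hT
    simp [hS, hT]
  · by_cases hT : i ∈ T <;> simp [hS, hT]

lemma restrict_univ {k : ℕ} (x : Fin k → ℝ) : _root_.restrict Finset.univ x = x := by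
  funext i; simp [_root_.restrict]

lemma l2norm_restrict_le_of_bound {k s : ℕ} (T : Finset (Fin k)) (x : Fin k → ℝ) (M : ℝ)
    (hM : 0 ≤ M) (hcard : T.card ≤ s) (hb : ∀ i ∈ T, |x i| ≤ M) :
    l2norm (_root_.restrict T x) ≤ Real.sqrt s * M := by
  have h1 : ∑ i, (_root_.restrict T x i) ^ 2 ≤ (s : ℝ) * M ^ 2 := by
    have : ∑ i, (_root_.restrict T x i) ^ 2 = ∑ i ∈ T, (x i) ^ 2 := by
      rw [← Finset.sum_filter_add_sum_filter_not Finset.univ (· ∈ T)]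
      have h2 : ∑ i ∈ Finset.univ.filter (· ∉ T), (_root_.restrict T x i) ^ 2 = 0 := by
        apply Finset.sum_eq_zero; intro i hi
        simp only [Finset.mem_filter] at hi
        simp [_root_.restrict, hi.2]
      rw [h2, add_zero]
      apply Finset.sum_congr (by ext i; simp)
      intro i hi
      simp [_root_.restrict, hi]
    rw [this]
    calc ∑ i ∈ T, (x i) ^ 2 ≤ ∑ _i ∈ T, M ^ 2 := by
          apply Finset.sum_le_sum; intro i hi
          rw [← sq_abs]
          exact pow_le_pow_left₀ (abs_nonneg _) (hb i hi) 2
      _ = (T.card : ℝ) * M ^ 2 := by rw [Finset.sum_const, nsmul_eq_mul]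
      _ ≤ (s : ℝ) * M ^ 2 := by
          apply mul_le_mul_of_nonneg_right _ (sq_nonneg M)
          exact_mod_cast hcard
  calc l2norm (_root_.restrict T x) ≤ Real.sqrt ((s : ℝ) * M ^ 2) := Real.sqrt_le_sqrt h1
    _ = Real.sqrt s * M := by
        rw [Real.sqrt_mul (Nat.cast_nonneg s), Real.sqrt_sq hM]

/-- existence of a subset of `k` largest-magnitude entries -/
lemma exists_maxset {m : ℕ} (h : Fin m → ℝ) :
    ∀ k : ℕ, ∀ R : Finset (Fin m), k ≤ R.card →
      ∃ S : Finset (Fin m), S ⊆ R ∧ S.card = k ∧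
        ∀ i ∈ S, ∀ j ∈ R \ S, |h j| ≤ |h i| := by
  intro k
  induction k with
  | zero => intro R _; exact ⟨∅, Finset.empty_subset R, rfl, by simp⟩
  | succ k ih =>
    intro R hk
    obtain ⟨S, hSR, hScard, hSmax⟩ := ih R (le_trans (Nat.le_succ k) hk)
    have hne : (R \ S).Nonempty := by
      rw [← Finset.card_pos, Finset.card_sdiff_of_subset hSR, hScard]
      omega
    obtain ⟨i, hi, hmax⟩ := Finset.exists_max_image (R \ S) (fun j => |h j|) hne
    refine ⟨insert i S, ?_, ?_, ?_⟩
    · exact Finset.insert_subset (Finset.mem_sdiff.1 hi).1 hSR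
    · rw [Finset.card_insert_of_notMem (Finset.mem_sdiff.1 hi).2, hScard]
    · intro i' hi' j hj
      have hjS : j ∈ R \ S := by
        rw [Finset.mem_sdiff] at hj ⊢
        refine ⟨hj.1, fun hjs => hj.2 (Finset.mem_insert_of_mem hjs)⟩
      rcases Finset.mem_insert.1 hi' with rfl | hi'S
      · exact hmax j hjS
      · exact hSmax i' hi'S j hjS
/-- greedy block decomposition bound -/
lemma blocks_lemma {m s : ℕ} (hs : 1 ≤ s) (h : Fin m → ℝ) :
    ∀ N : ℕ, ∀ R : Finset (Fin m), R.card ≤ N → ∀ M : ℝ, 0 ≤ M →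
      (∀ j ∈ R, |h j| ≤ M) →
      ∃ (J : ℕ) (Bl : ℕ → Finset (Fin m)),
        (∀ j ∈ Finset.range J, Bl j ⊆ R ∧ (Bl j).card ≤ s) ∧
        _root_.restrict R h = ∑ j ∈ Finset.range J, _root_.restrict (Bl j) h ∧
        ∑ j ∈ Finset.range J, l2norm (_root_.restrict (Bl j) h)
          ≤ Real.sqrt s * M + (Real.sqrt s)⁻¹ * ∑ i ∈ R, |h i| := by
  intro N
  induction N with
  | zero =>
    intro R hR M hM _
    have : R = ∅ := Finset.card_eq_zero.1 (Nat.le_zero.1 hR)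
    subst this
    refine ⟨0, fun _ => ∅, by simp, ?_, ?_⟩
    · funext i; simp [_root_.restrict]
    · simp [mul_nonneg (Real.sqrt_nonneg _) hM]
  | succ N ih =>
    intro R hR M hM hbound
    by_cases hRe : R = ∅
    · subst hRe
      refine ⟨0, fun _ => ∅, by simp, ?_, ?_⟩
      · funext i; simp [_root_.restrict]
      · simp [mul_nonneg (Real.sqrt_nonneg _) hM]
    -- choose the block of the (min s R.card) largest entries
    obtain ⟨S, hSR, hScard, hSmax⟩ := exists_maxset h (min s R.card) R (min_le_right _ _)
    have hSne : S.Nonempty := by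
      rw [← Finset.card_pos, hScard]
      have : 0 < R.card := Finset.card_pos.2 (Finset.nonempty_iff_ne_empty.2 hRe)
      omega
    set R' := R \ S with hR'def
    have hR'card : R'.card < R.card := by
      rw [Finset.card_sdiff_of_subset hSR]
      have : 0 < S.card := Finset.card_pos.2 hSne
      omega
    set M' : ℝ := (s : ℝ)⁻¹ * ∑ i ∈ S, |h i| with hM'def
    have hM'0 : 0 ≤ M' := by
      apply mul_nonneg (inv_nonneg.2 (Nat.cast_nonneg s))
      exact Finset.sum_nonneg fun i _ => abs_nonneg _
    have hspos : (0:ℝ) < s := by exact_mod_cast hs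
    have hM'bound : ∀ j ∈ R', |h j| ≤ M' := by
      intro j hj
      -- if S.card < s then R' = ∅
      by_cases hcs : S.card = s
      · have : (s : ℝ) * |h j| ≤ ∑ i ∈ S, |h i| := by
          calc (s : ℝ) * |h j| = ∑ _i ∈ S, |h j| := by
                rw [Finset.sum_const, nsmul_eq_mul, hcs]
            _ ≤ ∑ i ∈ S, |h i| := Finset.sum_le_sum fun i hi => hSmax i hi j hj
        rw [hM'def, ← div_eq_inv_mul, le_div_iff₀ hspos]
        linarith
      · -- S.card = min s R.card < s forces S = R, so R' = ∅
        exfalso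
        have hSR' : S.card = R.card := by omega
        have : S = R := Finset.eq_of_subset_of_card_le hSR (le_of_eq hSR'.symm)
        rw [hR'def, this, Finset.sdiff_self] at hj
        exact absurd hj (Finset.notMem_empty j)
    obtain ⟨J', Bl', hBl'sub, hBl'eq, hBl'sum⟩ :=
      ih R' (by omega) M' hM'0 hM'bound
    refine ⟨J' + 1, fun j => if j = 0 then S else Bl' (j - 1), ?_, ?_, ?_⟩
    · intro j hj
      rcases j with _ | k
      · exact ⟨hSR, by show S.card ≤ s; rw [hScard]; exact min_le_left _ _⟩
      · have hj' : k ∈ Finset.range J' := by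
          rw [Finset.mem_range] at hj ⊢; omega
        show Bl' (k + 1 - 1) ⊆ R ∧ (Bl' (k + 1 - 1)).card ≤ s
        rw [Nat.add_sub_cancel]
        exact ⟨le_trans (hBl'sub _ hj').1 Finset.sdiff_subset, (hBl'sub _ hj').2⟩
    · have hsplit : _root_.restrict R h = _root_.restrict S h + _root_.restrict R' h := by
        rw [← restrict_union S R' h Finset.disjoint_sdiff,
          Finset.union_sdiff_of_subset hSR]
      have e0 : (if (0:ℕ) = 0 then S else Bl' (0-1)) = S := rfl
      have es : ∀ j : ℕ, (if j + 1 = 0 then S else Bl' (j+1-1)) = Bl' j := by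
        intro j; rw [if_neg (Nat.succ_ne_zero j), Nat.add_sub_cancel]
      rw [hsplit, Finset.sum_range_succ']
      simp only [e0, es, if_true]
      rw [hBl'eq, add_comm]
    · have e0 : (if (0:ℕ) = 0 then S else Bl' (0-1)) = S := rfl
      have es : ∀ j : ℕ, (if j + 1 = 0 then S else Bl' (j+1-1)) = Bl' j := by
        intro j; rw [if_neg (Nat.succ_ne_zero j), Nat.add_sub_cancel]
      rw [Finset.sum_range_succ']
      simp only [e0, es, if_true]
      have h1 : l2norm (_root_.restrict S h) ≤ Real.sqrt s * M :=
        l2norm_restrict_le_of_bound S h M hM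
          (by rw [hScard]; exact min_le_left _ _)
          (fun i hi => hbound i (hSR hi))
      have hsqs : Real.sqrt s * M' = (Real.sqrt s)⁻¹ * ∑ i ∈ S, |h i| := by
        rw [hM'def, ← mul_assoc]
        congr 1
        have hsq : Real.sqrt s * Real.sqrt s = (s:ℝ) := Real.mul_self_sqrt (le_of_lt hspos)
        have hsqpos : (0:ℝ) < Real.sqrt s := Real.sqrt_pos.2 hspos
        have h1 : Real.sqrt s * (s:ℝ)⁻¹ * Real.sqrt s = 1 := by
          have e : Real.sqrt s * (s:ℝ)⁻¹ * Real.sqrt s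
              = (Real.sqrt s * Real.sqrt s) * (s:ℝ)⁻¹ := by ring
          rw [e, hsq, mul_inv_cancel₀ (ne_of_gt hspos)]
        exact eq_inv_of_mul_eq_one_right (by linear_combination h1)
      have hsum : ∑ i ∈ R, |h i| = ∑ i ∈ S, |h i| + ∑ i ∈ R', |h i| := by
        rw [hR'def, add_comm, Finset.sum_sdiff hSR]
      rw [hsum]
      have h2 := hBl'sum
      rw [hsqs] at h2
      have hsinv : (0:ℝ) ≤ (Real.sqrt s)⁻¹ := inv_nonneg.2 (Real.sqrt_nonneg _)
      calc ∑ j ∈ Finset.range J', l2norm (_root_.restrict (Bl' j) h)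
            + l2norm (_root_.restrict S h)
          ≤ ((Real.sqrt s)⁻¹ * ∑ i ∈ S, |h i| + (Real.sqrt s)⁻¹ * ∑ i ∈ R', |h i|)
            + Real.sqrt s * M := add_le_add h2 h1
        _ = Real.sqrt s * M + (Real.sqrt s)⁻¹ * (∑ i ∈ S, |h i| + ∑ i ∈ R', |h i|) := by ring
lemma l2sq_add' {k : ℕ} (x y : Fin k → ℝ) :
    (l2norm (x + y)) ^ 2 = (l2norm x) ^ 2 + 2 * dotp x y + (l2norm y) ^ 2 := by
  simp only [l2norm_sq, dotp, Pi.add_apply]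
  have e : ∀ i : Fin k, (x i + y i) ^ 2 = x i ^ 2 + 2 * (x i * y i) + y i ^ 2 :=
    fun i => by ring
  simp_rw [e]
  rw [Finset.sum_add_distrib, Finset.sum_add_distrib, Finset.mul_sum]

lemma dotp_disjoint_zero {k : ℕ} (x y : Fin k → ℝ) (hd : ∀ i, x i = 0 ∨ y i = 0) :
    dotp x y = 0 := by
  apply Finset.sum_eq_zero
  intro i _
  rcases hd i with h0 | h0 <;> rw [h0] <;> ring

lemma support_add_subset {k : ℕ} (x y : Fin k → ℝ) :
    support (x + y) ⊆ support x ∪ support y := by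
  intro i hi
  simp only [support, mem_filter, mem_univ, true_and, Finset.mem_union, Pi.add_apply] at hi ⊢
  by_contra hc
  push_neg at hc
  rw [hc.1, hc.2] at hi
  exact hi (by ring)

lemma sparse_add {k a b : ℕ} {x y : Fin k → ℝ} (hx : Sparse a x) (hy : Sparse b y) :
    Sparse (a + b) (x + y) := by
  unfold Sparse at *
  calc (Finset.univ.filter fun i => (x + y) i ≠ 0).card
      ≤ ((Finset.univ.filter fun i => x i ≠ 0) ∪ (Finset.univ.filter fun i => y i ≠ 0)).card :=
        Finset.card_le_card (support_add_subset x y)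
    _ ≤ _ := le_trans (Finset.card_union_le _ _) (add_le_add hx hy)

lemma sparse_smul {k a : ℕ} {x : Fin k → ℝ} (c : ℝ) (hx : Sparse a x) :
    Sparse a (c • x) := by
  unfold Sparse at *
  refine le_trans (Finset.card_le_card ?_) hx
  intro i hi
  simp only [mem_filter, mem_univ, true_and, Pi.smul_apply, smul_eq_mul] at hi ⊢
  exact fun h0 => hi (by rw [h0, mul_zero])

lemma l2norm_smul {k : ℕ} (c : ℝ) (x : Fin k → ℝ) (hc : 0 ≤ c) :
    l2norm (c • x) = c * l2norm x := by
  unfold l2norm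
  have e : ∀ i : Fin k, ((c • x) i) ^ 2 = c ^ 2 * (x i) ^ 2 := fun i => by
    simp [Pi.smul_apply, smul_eq_mul]; ring
  simp_rw [e]
  rw [← Finset.mul_sum, Real.sqrt_mul (sq_nonneg c), Real.sqrt_sq hc]

lemma dotp_smul_smul {n : ℕ} (a b : ℝ) (x y : Fin n → ℝ) :
    dotp (a • x) (b • y) = a * b * dotp x y := by
  unfold dotp
  rw [Finset.mul_sum]
  apply Finset.sum_congr rfl
  intro i _
  simp [Pi.smul_apply, smul_eq_mul]; ring

/-- restricted orthogonality from RIP -/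
lemma ro_lemma {n m s : ℕ} {δ : ℝ} {B : Matrix (Fin n) (Fin m) ℝ}
    (hB : RIP (2 * s) δ B) (hδ0 : 0 ≤ δ)
    (x y : Fin m → ℝ) (hx : Sparse s x) (hy : Sparse s y)
    (hd : ∀ i, x i = 0 ∨ y i = 0) :
    |dotp (B.mulVec x) (B.mulVec y)| ≤ δ * l2norm x * l2norm y := by
  set a := l2norm x with ha
  set b := l2norm y with hb
  rcases eq_or_lt_of_le (l2norm_nonneg x) with ha0 | ha0
  · have hx0 : x = 0 := (l2norm_eq_zero_iff x).1 ha0.symm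
    have hz : dotp (B.mulVec x) (B.mulVec y) = 0 := by
      rw [hx0]; simp [dotp, Matrix.mulVec_zero]
    rw [hz, abs_zero, ha, ← ha0, mul_zero, zero_mul]
  rcases eq_or_lt_of_le (l2norm_nonneg y) with hb0 | hb0
  · have hy0 : y = 0 := (l2norm_eq_zero_iff y).1 hb0.symm
    have hz : dotp (B.mulVec x) (B.mulVec y) = 0 := by
      rw [hy0]; simp [dotp, Matrix.mulVec_zero]
    rw [hz, abs_zero, hb, ← hb0, mul_zero]
  set X := b • x with hX
  set Y := a • y with hY
  have hdXY : ∀ i, X i = 0 ∨ Y i = 0 := by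
    intro i
    rcases hd i with h0 | h0
    · left; simp [hX, h0]
    · right; simp [hY, h0]
  have hXn : l2norm X = b * a := l2norm_smul b x (le_of_lt hb0)
  have hYn : l2norm Y = a * b := l2norm_smul a y (le_of_lt ha0)
  -- norms of X ± Y
  have hplus : (l2norm (X + Y)) ^ 2 = 2 * (a * b) ^ 2 := by
    rw [l2sq_add', dotp_disjoint_zero X Y hdXY, hXn, hYn]; ring
  have hminus : (l2norm (X + (-1 : ℝ) • Y)) ^ 2 = 2 * (a * b) ^ 2 := by
    rw [l2sq_add']
    have h1 : dotp X ((-1 : ℝ) • Y) = 0 := by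
      apply dotp_disjoint_zero
      intro i
      rcases hdXY i with h0 | h0
      · left; exact h0
      · right; simp [h0]
    have h2 : l2norm ((-1 : ℝ) • Y) = l2norm Y := by
      unfold l2norm
      apply congrArg
      apply Finset.sum_congr rfl
      intro i _
      simp only [Pi.smul_apply, smul_eq_mul]
      ring
    rw [h1, h2, hXn, hYn]; ring
  -- sparsity
  have hXs : Sparse s X := sparse_smul b hx
  have hYs : Sparse s Y := sparse_smul a hy
  have hXYs : Sparse (2 * s) (X + Y) := by
    have := sparse_add hXs hYs
    rwa [two_mul]
  have hXYs' : Sparse (2 * s) (X + (-1 : ℝ) • Y) := by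
    have := sparse_add hXs (sparse_smul (-1 : ℝ) hYs)
    rwa [two_mul]
  have hrip1 := hB (X + Y) hXYs
  have hrip2 := hB (X + (-1 : ℝ) • Y) hXYs'
  rw [hplus] at hrip1
  rw [hminus] at hrip2
  -- expand mulVec
  have hmv1 : B.mulVec (X + Y) = B.mulVec X + B.mulVec Y := Matrix.mulVec_add B X Y
  have hmv2 : B.mulVec (X + (-1 : ℝ) • Y) = B.mulVec X + (-1 : ℝ) • B.mulVec Y := by
    simp only [Matrix.mulVec_add, Matrix.mulVec_smul]
  rw [hmv1] at hrip1
  rw [hmv2] at hrip2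
  have hexp1 := l2sq_add' (B.mulVec X) (B.mulVec Y)
  have hexp2 := l2sq_add' (B.mulVec X) ((-1 : ℝ) • B.mulVec Y)
  have hneg2 : (l2norm ((-1 : ℝ) • B.mulVec Y)) ^ 2 = (l2norm (B.mulVec Y)) ^ 2 := by
    unfold l2norm
    have e : ∑ i, (((-1 : ℝ) • B.mulVec Y) i) ^ 2 = ∑ i, ((B.mulVec Y) i) ^ 2 := by
      apply Finset.sum_congr rfl
      intro i _
      simp only [Pi.smul_apply, smul_eq_mul]
      ring
    rw [e]
  have hdsm : dotp (B.mulVec X) ((-1 : ℝ) • B.mulVec Y) = - dotp (B.mulVec X) (B.mulVec Y) := by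
    unfold dotp
    rw [← Finset.sum_neg_distrib]
    apply Finset.sum_congr rfl
    intro i _
    simp only [Pi.smul_apply, smul_eq_mul]
    ring
  rw [hexp1] at hrip1
  rw [hexp2, hdsm, hneg2] at hrip2
  -- bound on dotp X Y level
  have hXY : dotp (B.mulVec X) (B.mulVec Y) = a * b * dotp (B.mulVec x) (B.mulVec y) := by
    rw [hX, hY, Matrix.mulVec_smul, Matrix.mulVec_smul, dotp_smul_smul]
    ring
  set d := dotp (B.mulVec x) (B.mulVec y) with hdd
  set D := dotp (B.mulVec X) (B.mulVec Y) with hD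
  set P := (l2norm (B.mulVec X)) ^ 2 with hP
  set Q := (l2norm (B.mulVec Y)) ^ 2 with hQ
  clear_value d D P Q X Y a b
  have habpos : 0 < a * b := by rw [ha, hb]; exact mul_pos ha0 hb0
  have hub : a * b * d ≤ δ * (a * b) ^ 2 := by
    rw [← hXY]; nlinarith [hrip1.2, hrip2.1]
  have hlb : -(δ * (a * b) ^ 2) ≤ a * b * d := by
    rw [← hXY]; nlinarith [hrip1.1, hrip2.2]
  clear hB hx hy hd hdXY hXn hYn hplus hminus hXs hYs hXYs hXYs' hrip1 hrip2
  clear hmv1 hmv2 hexp1 hexp2 hneg2 hdsm hXY hdd hD hP hQ hX hY ha hb ha0 hb0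
  rw [abs_le]
  constructor
  · nlinarith [hub, hlb, habpos]
  · nlinarith [hub, hlb, habpos]
lemma dotp_add_left {k : ℕ} (x y z : Fin k → ℝ) :
    dotp (x + y) z = dotp x z + dotp y z := by
  unfold dotp
  rw [← Finset.sum_add_distrib]
  exact Finset.sum_congr rfl fun i _ => by simp [Pi.add_apply]; ring

lemma dotp_sum_right {k : ℕ} (x : Fin k → ℝ) (t : Finset ℕ) (w : ℕ → Fin k → ℝ) :
    dotp x (∑ j ∈ t, w j) = ∑ j ∈ t, dotp x (w j) := by
  unfold dotp
  rw [Finset.sum_comm]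
  apply Finset.sum_congr rfl
  intro i _
  rw [Finset.sum_apply, Finset.mul_sum]

lemma mulVec_finsum {n m : ℕ} (B : Matrix (Fin n) (Fin m) ℝ) (t : Finset ℕ)
    (w : ℕ → Fin m → ℝ) :
    B.mulVec (∑ j ∈ t, w j) = ∑ j ∈ t, B.mulVec (w j) := by
  simp only [← Matrix.mulVecLin_apply]
  exact map_sum _ _ _

lemma l1norm_restrict {k : ℕ} (T : Finset (Fin k)) (x : Fin k → ℝ) :
    l1norm (_root_.restrict T x) = ∑ i ∈ T, |x i| := by
  unfold l1norm
  rw [← Finset.sum_filter_add_sum_filter_not Finset.univ (· ∈ T)]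
  have h2 : ∑ i ∈ Finset.univ.filter (· ∉ T), |_root_.restrict T x i| = 0 := by
    apply Finset.sum_eq_zero; intro i hi
    simp only [Finset.mem_filter] at hi
    simp [_root_.restrict, hi.2]
  rw [h2, add_zero]
  apply Finset.sum_congr (by ext i; simp)
  intro i hi
  simp [_root_.restrict, hi]

lemma neg_bound_helper {d0 d1 a0 a1 v δ : ℝ} (h0 : |d0| ≤ δ * a0 * v)
    (h1 : |d1| ≤ δ * a1 * v) : -(δ * (a0 + a1) * v) ≤ d0 + d1 := by
  have hn0 := neg_abs_le d0
  have hn1 := neg_abs_le d1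
  nlinarith

lemma assemble_helper {δ t E DH S aK u w : ℝ}
    (hlow : (1 - δ) * t ^ 2 ≤ E) (he : E = DH - S) (hcs : DH ≤ u * t)
    (hsb : -aK ≤ S) (h2 : aK ≤ w * t) :
    (1 - δ) * t ^ 2 ≤ t * (u + w) := by nlinarith

lemma final_helper {t W δ : ℝ} (h1 : (1 - δ) * t ^ 2 ≤ t * W) (ht : 0 < t) :
    t * (1 - δ) ≤ W := by nlinarith

/-- single-vector bound (equation (D7) in Appendix D). -/
theorem stmt6 {n m s : ℕ} (hs : 1 ≤ s)
    (B : Matrix (Fin n) (Fin m) ℝ)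
    (δ : ℝ) (hδ : δ < 1) (hB : RIP (2 * s) δ B)
    (h : Fin m → ℝ) (c ε : ℝ) (hc : 0 ≤ c) (hε : 0 ≤ ε)
    (hBh : l2norm (B.mulVec h) ≤ 2 * c * ε)
    (T0 T1 : Finset (Fin m))
    (hT0card : T0.card ≤ s)
    (hT0ccard : s ≤ (T0ᶜ : Finset (Fin m)).card)
    (hT1sub : T1 ⊆ T0ᶜ)
    (hT1card : T1.card = s)
    (hT1max : ∀ i ∈ T1, ∀ j ∈ T0ᶜ \ T1, |h j| ≤ |h i|) :
    l2norm (restrict (T0 ∪ T1) h) ≤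
      (2 * Real.sqrt (1 + δ) / (1 - δ)) * c * ε +
        (Real.sqrt 2 * δ / (1 - δ)) * (Real.sqrt s)⁻¹ * l1norm (restrict T0ᶜ h) := by
  -- m is positive
  have hm : 0 < m := by
    have h1 : (T0ᶜ : Finset (Fin m)).card ≤ m := by
      simpa using Finset.card_le_univ (T0ᶜ : Finset (Fin m))
    omega
  -- δ is nonnegative
  have hδ0 : 0 ≤ δ := by
    set i0 : Fin m := ⟨0, hm⟩ with hi0
    set e : Fin m → ℝ := fun i => if i = i0 then (1:ℝ) else 0 with he
    have hsp : Sparse (2 * s) e := by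
      unfold Sparse
      have : (Finset.univ.filter fun i => e i ≠ 0) ⊆ {i0} := by
        intro i hi
        simp only [Finset.mem_filter, he] at hi
        simp only [Finset.mem_singleton]
        by_contra hne
        exact hi.2 (if_neg hne)
      calc (Finset.univ.filter fun i => e i ≠ 0).card ≤ ({i0} : Finset (Fin m)).card :=
            Finset.card_le_card this
        _ = 1 := Finset.card_singleton i0
        _ ≤ 2 * s := by omega
    have hnorm : (l2norm e) ^ 2 = 1 := by
      rw [l2norm_sq]
      have : ∀ i : Fin m, (e i) ^ 2 = if i = i0 then (1:ℝ) else 0 := by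
        intro i
        by_cases hie : i = i0 <;> simp [he, hie]
      simp_rw [this]
      rw [Finset.sum_ite_eq' Finset.univ i0 (fun _ => (1:ℝ))]
      simp
    have h1 := hB e hsp
    rw [hnorm] at h1
    linarith [h1.1, h1.2]
  have h1δ : (0:ℝ) < 1 - δ := by linarith
  have h1δ' : (0:ℝ) ≤ 1 + δ := by linarith
  have hspos : (0:ℝ) < s := by exact_mod_cast hs
  have hsqrts : (0:ℝ) < Real.sqrt s := Real.sqrt_pos.2 hspos
  have hsinv : (0:ℝ) ≤ (Real.sqrt s)⁻¹ := inv_nonneg.2 (le_of_lt hsqrts)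
  -- basic sets
  have hT0T1 : Disjoint T0 T1 := by
    rw [Finset.disjoint_right]
    intro i hi
    exact (Finset.mem_compl.1 (hT1sub hi))
  set R := T0ᶜ \ T1 with hR
  set x0 := _root_.restrict T0 h with hx0
  set x1 := _root_.restrict T1 h with hx1
  set x01 := _root_.restrict (T0 ∪ T1) h with hx01
  have hx01split : x01 = x0 + x1 := restrict_union T0 T1 h hT0T1
  -- L1 value
  set L1 := l1norm (_root_.restrict T0ᶜ h) with hL1
  have hL1eq : L1 = (∑ i ∈ T1, |h i|) + ∑ i ∈ R, |h i| := by
    rw [hL1, l1norm_restrict, hR, add_comm, Finset.sum_sdiff hT1sub]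
  have hL1nn : 0 ≤ L1 := by
    rw [hL1eq]
    have := Finset.sum_nonneg (fun i (_ : i ∈ T1) => abs_nonneg (h i))
    have := Finset.sum_nonneg (fun i (_ : i ∈ R) => abs_nonneg (h i))
    linarith
  -- bound for entries of R
  set M : ℝ := (s : ℝ)⁻¹ * ∑ i ∈ T1, |h i| with hM
  have hM0 : 0 ≤ M := by
    apply mul_nonneg (inv_nonneg.2 (le_of_lt hspos))
    exact Finset.sum_nonneg fun i _ => abs_nonneg _
  have hMbound : ∀ j ∈ R, |h j| ≤ M := by
    intro j hj
    have hsum : (s : ℝ) * |h j| ≤ ∑ i ∈ T1, |h i| := by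
      calc (s : ℝ) * |h j| = ∑ _i ∈ T1, |h j| := by
            rw [Finset.sum_const, nsmul_eq_mul, hT1card]
        _ ≤ ∑ i ∈ T1, |h i| := Finset.sum_le_sum fun i hi => hT1max i hi j hj
    rw [hM, ← div_eq_inv_mul, le_div_iff₀ hspos]
    linarith
  -- block decomposition of R
  obtain ⟨J, Bl, hBl, hReq, hBsum⟩ := blocks_lemma hs h R.card R le_rfl M hM0 hMbound
  set K := ∑ j ∈ Finset.range J, l2norm (_root_.restrict (Bl j) h) with hK
  have hKnn : 0 ≤ K :=
    Finset.sum_nonneg fun j _ => l2norm_nonneg _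
  have hsqsM : Real.sqrt s * M = (Real.sqrt s)⁻¹ * ∑ i ∈ T1, |h i| := by
    rw [hM, ← mul_assoc]
    congr 1
    have hsq : Real.sqrt s * Real.sqrt s = (s:ℝ) := Real.mul_self_sqrt (le_of_lt hspos)
    have h1 : Real.sqrt s * (s:ℝ)⁻¹ * Real.sqrt s = 1 := by
      have e : Real.sqrt s * (s:ℝ)⁻¹ * Real.sqrt s
          = (Real.sqrt s * Real.sqrt s) * (s:ℝ)⁻¹ := by ring
      rw [e, hsq, mul_inv_cancel₀ (ne_of_gt hspos)]
    exact eq_inv_of_mul_eq_one_right (by linear_combination h1)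
  have hKle : K ≤ (Real.sqrt s)⁻¹ * L1 := by
    rw [hL1eq, mul_add]
    calc K ≤ Real.sqrt s * M + (Real.sqrt s)⁻¹ * ∑ i ∈ R, |h i| := hBsum
      _ = (Real.sqrt s)⁻¹ * ∑ i ∈ T1, |h i| + (Real.sqrt s)⁻¹ * ∑ i ∈ R, |h i| := by
          rw [hsqsM]
  -- sparsity facts
  have hx0sp : Sparse s x0 := sparse_restrict T0 h hT0card
  have hx1sp : Sparse s x1 := sparse_restrict T1 h (le_of_eq hT1card)
  have hx01sp : Sparse (2 * s) x01 := by
    apply sparse_restrict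
    calc (T0 ∪ T1).card ≤ T0.card + T1.card := Finset.card_union_le T0 T1
      _ ≤ 2 * s := by omega
  -- norms
  set t := l2norm x01 with ht
  have htnn : 0 ≤ t := l2norm_nonneg _
  have hdot01 : dotp x0 x1 = 0 := by
    apply dotp_disjoint_zero
    intro i
    by_cases hi : i ∈ T0
    · right
      have hni : i ∉ T1 := Finset.disjoint_left.1 hT0T1 hi
      simp [hx1, _root_.restrict, hni]
    · left; simp [hx0, _root_.restrict, hi]
  have hpyth : (l2norm x0) ^ 2 + (l2norm x1) ^ 2 = t ^ 2 := by
    rw [ht, hx01split, l2sq_add', hdot01]; ring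
  have hx0nn := l2norm_nonneg x0
  have hx1nn := l2norm_nonneg x1
  have hsum2 : l2norm x0 + l2norm x1 ≤ Real.sqrt 2 * t := by
    have hsq : (l2norm x0 + l2norm x1) ^ 2 ≤ 2 * t ^ 2 := by
      nlinarith [hpyth, sq_nonneg (l2norm x0 - l2norm x1)]
    calc l2norm x0 + l2norm x1 = Real.sqrt ((l2norm x0 + l2norm x1) ^ 2) :=
          (Real.sqrt_sq (by linarith)).symm
      _ ≤ Real.sqrt (2 * t ^ 2) := Real.sqrt_le_sqrt hsq
      _ = Real.sqrt 2 * t := by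
          rw [Real.sqrt_mul (by norm_num), Real.sqrt_sq htnn]
  -- decomposition of h
  have hdecomp : h = x01 + _root_.restrict R h := by
    have hu : (T0 ∪ T1) ∪ R = Finset.univ := by
      ext i
      simp only [Finset.mem_union, Finset.mem_sdiff, Finset.mem_compl, Finset.mem_univ,
        iff_true, hR]
      by_cases h0 : i ∈ T0
      · tauto
      · by_cases h1 : i ∈ T1 <;> tauto
    have hdisj : Disjoint (T0 ∪ T1) R := by
      rw [Finset.disjoint_left]
      intro i hi hiR
      rw [hR, Finset.mem_sdiff, Finset.mem_compl] at hiR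
      rcases Finset.mem_union.1 hi with h0 | h1
      · exact hiR.1 h0
      · exact hiR.2 h1
    calc h = _root_.restrict ((T0 ∪ T1) ∪ R) h := by rw [hu, restrict_univ]
      _ = x01 + _root_.restrict R h := restrict_union _ _ h hdisj
  -- key inner product expansion
  set y : ℕ → Fin m → ℝ := fun j => _root_.restrict (Bl j) h with hy
  have hkey : dotp (B.mulVec x01) (B.mulVec h)
      = dotp (B.mulVec x01) (B.mulVec x01)
        + ∑ j ∈ Finset.range J, dotp (B.mulVec x01) (B.mulVec (y j)) := by
    conv_lhs => rw [hdecomp]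
    rw [Matrix.mulVec_add, dotp_add_right, hReq, mulVec_finsum, dotp_sum_right]
  -- per block bounds
  have hblock : ∀ j ∈ Finset.range J,
      -(δ * (l2norm x0 + l2norm x1) * l2norm (y j))
        ≤ dotp (B.mulVec x01) (B.mulVec (y j)) := by
    intro j hj
    have hsub := (hBl j hj).1
    have hcard := (hBl j hj).2
    have hyspj : Sparse s (y j) := sparse_restrict _ h hcard
    have hd0 : ∀ i, x0 i = 0 ∨ y j i = 0 := by
      intro i
      by_cases hi : i ∈ T0
      · right
        have hiR : i ∉ Bl j := fun hin => by
          have hmem := hsub hin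
          rw [hR, Finset.mem_sdiff, Finset.mem_compl] at hmem
          exact hmem.1 hi
        simp [hy, _root_.restrict, hiR]
      · left; simp [hx0, _root_.restrict, hi]
    have hd1 : ∀ i, x1 i = 0 ∨ y j i = 0 := by
      intro i
      by_cases hi : i ∈ T1
      · right
        have hiR : i ∉ Bl j := fun hin => by
          have hmem := hsub hin
          rw [hR, Finset.mem_sdiff] at hmem
          exact hmem.2 hi
        simp [hy, _root_.restrict, hiR]
      · left; simp [hx1, _root_.restrict, hi]
    have hro0 := ro_lemma hB hδ0 x0 (y j) hx0sp hyspj hd0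
    have hro1 := ro_lemma hB hδ0 x1 (y j) hx1sp hyspj hd1
    have hsplit : dotp (B.mulVec x01) (B.mulVec (y j))
        = dotp (B.mulVec x0) (B.mulVec (y j)) + dotp (B.mulVec x1) (B.mulVec (y j)) := by
      rw [hx01split, Matrix.mulVec_add, dotp_add_left]
    rw [hsplit]
    exact neg_bound_helper hro0 hro1
  have hsumblock : -(δ * (l2norm x0 + l2norm x1) * K)
      ≤ ∑ j ∈ Finset.range J, dotp (B.mulVec x01) (B.mulVec (y j)) := by
    have e1 : δ * (l2norm x0 + l2norm x1) * K
        = ∑ j ∈ Finset.range J, δ * (l2norm x0 + l2norm x1) * l2norm (y j) := by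
      rw [hK, Finset.mul_sum]
    rw [e1, ← Finset.sum_neg_distrib]
    exact Finset.sum_le_sum hblock
  -- RIP bounds on x01
  have hripx01 := hB x01 hx01sp
  have hup : l2norm (B.mulVec x01) ≤ Real.sqrt (1 + δ) * t := by
    calc l2norm (B.mulVec x01) = Real.sqrt ((l2norm (B.mulVec x01)) ^ 2) :=
          (Real.sqrt_sq (l2norm_nonneg _)).symm
      _ ≤ Real.sqrt ((1 + δ) * t ^ 2) := Real.sqrt_le_sqrt hripx01.2
      _ = Real.sqrt (1 + δ) * t := by rw [Real.sqrt_mul h1δ', Real.sqrt_sq htnn]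
  have hlow : (1 - δ) * t ^ 2 ≤ dotp (B.mulVec x01) (B.mulVec x01) := by
    rw [dotp_self]; exact hripx01.1
  -- Cauchy-Schwarz with hBh
  have hBhnn : 0 ≤ l2norm (B.mulVec h) := l2norm_nonneg _
  have hcs : dotp (B.mulVec x01) (B.mulVec h) ≤ Real.sqrt (1 + δ) * t * (2 * c * ε) := by
    calc dotp (B.mulVec x01) (B.mulVec h)
        ≤ l2norm (B.mulVec x01) * l2norm (B.mulVec h) := dotp_le _ _
      _ ≤ (Real.sqrt (1 + δ) * t) * (2 * c * ε) :=
          mul_le_mul hup hBh hBhnn (mul_nonneg (Real.sqrt_nonneg _) htnn)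
  -- main inequality
  have h2 : δ * (l2norm x0 + l2norm x1) * K
      ≤ δ * (Real.sqrt 2 * t) * ((Real.sqrt s)⁻¹ * L1) := by
    apply mul_le_mul (mul_le_mul_of_nonneg_left hsum2 hδ0) hKle hKnn
    exact mul_nonneg hδ0 (mul_nonneg (Real.sqrt_nonneg 2) htnn)
  have hmain : (1 - δ) * t ^ 2
      ≤ t * (Real.sqrt (1 + δ) * (2 * c * ε) + Real.sqrt 2 * δ * ((Real.sqrt s)⁻¹ * L1)) := by
    have e1 : dotp (B.mulVec x01) (B.mulVec x01)
        = dotp (B.mulVec x01) (B.mulVec h)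
          - ∑ j ∈ Finset.range J, dotp (B.mulVec x01) (B.mulVec (y j)) := by
      rw [hkey]; ring
    exact assemble_helper hlow e1 (hcs.trans_eq (by ring)) hsumblock (h2.trans_eq (by ring))
  -- conclude
  set W := Real.sqrt (1 + δ) * (2 * c * ε) + Real.sqrt 2 * δ * ((Real.sqrt s)⁻¹ * L1) with hW
  have hWnn : 0 ≤ W := by
    have w1 : 0 ≤ Real.sqrt (1 + δ) * (2 * c * ε) := by positivity
    have w2 : 0 ≤ Real.sqrt 2 * δ * ((Real.sqrt s)⁻¹ * L1) :=
      mul_nonneg (mul_nonneg (Real.sqrt_nonneg 2) hδ0) (mul_nonneg hsinv hL1nn)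
    rw [hW]; linarith
  have hgoal_eq : (2 * Real.sqrt (1 + δ) / (1 - δ)) * c * ε +
        (Real.sqrt 2 * δ / (1 - δ)) * (Real.sqrt s)⁻¹ * L1 = W / (1 - δ) := by
    rw [hW]; field_simp
  rw [hgoal_eq, le_div_iff₀ h1δ]
  rcases eq_or_lt_of_le htnn with ht0 | ht0
  · rw [← ht0, zero_mul]; exact hWnn
  · exact final_helper hmain ht0
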